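/- The map f sending the continued fraction [q_0, …, q_{m−1}, q_m] (with q_0 ≥ 0, intermediate q_i ≥ 1, and q_m ≥ 2 when m ≥ 1; and [q_0] with q_0 ≥ 1 when m = 0) to the LR-string S(q_0, …, q_{m−1}, q_m − 1) is a bijection from this set of continued-fraction index sequences to the set of all LR-strings, and it preserves level: the length of f([q_0,…,q_m]) equals q_0 + ⋯ + q_m − 1. -/

import Mathlib

open List

/-- `r`-value of an LR-string (`true` = R, `false` = L):
`r(ε) = 1`, `r(SL) = r(S) - 2^(-|SL|)`, `r(SR) = r(S) + 2^(-|SR|)`. -/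
def rval (S : List Bool) : ℚ :=
  1 + ∑ i ∈ Finset.range S.length,
      (if S.getD i false then ((2:ℚ)^(i+1))⁻¹ else -((2:ℚ)^(i+1))⁻¹)

/-- Generalized strings: LR-strings plus the formal symbols `R⁻¹ = inv true`
and `L⁻¹ = inv false`. -/
inductive Gen where
  | inv : Bool → Gen
  | str : List Bool → Gen
deriving DecidableEq

/-- Left parent: `P_L(ε) = R⁻¹`, `P_L(SL) = P_L(S)`, `P_L(SR) = S`. -/
def PL (S : List Bool) : Gen :=
  match S.reverse.dropWhile (· = false) with
  | [] => Gen.inv true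
  | _ :: t => Gen.str t.reverse

/-- Right parent: `P_R(ε) = L⁻¹`, `P_R(SL) = S`, `P_R(SR) = P_R(S)`. -/
def PR (S : List Bool) : Gen :=
  match S.reverse.dropWhile (· = true) with
  | [] => Gen.inv false
  | _ :: t => Gen.str t.reverse

/-- Extension of `r` to generalized strings: `r(R⁻¹) = 0`, `r(L⁻¹) = 2`. -/
def rg : Gen → ℚ
  | Gen.inv true => 0
  | Gen.inv false => 2
  | Gen.str S => rval S

/-- Length of a generalized string; the formal symbols have length `-1`. -/
def glen : Gen → ℤ
  | Gen.inv _ => -1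
  | Gen.str S => S.length

/-- Position function: `N(ε) = 0`, `N(SL) = 2N(S)+1`, `N(SR) = 2N(S)+2`. -/
def posN (S : List Bool) : ℕ :=
  ∑ i ∈ Finset.range S.length, (if S.getD i false then 2 else 1) * 2^(S.length - 1 - i)

/-- The alternating-block string `S(k₀,…,k_m) = R^{k₀} L^{k₁} R^{k₂} ⋯`. -/
def blockStr (ks : List ℕ) : List Bool :=
  (((List.range ks.length).zip ks).map (fun p => List.replicate p.2 (decide (p.1 % 2 = 0)))).flatten

/-- Continued fraction `[q₀,…,q_m]`. -/
def cf : List ℚ → ℚ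
  | [] => 0
  | [q] => q
  | q :: qs => q + (cf qs)⁻¹

/-- Admissible continued-fraction index sequences: `[q₀]` with `q₀ ≥ 1`, or
`[q₀,…,q_m]` with `m ≥ 1`, intermediate `qᵢ ≥ 1`, and `q_m ≥ 2`. -/
def CFAdmissible (qs : List ℕ) : Prop :=
  qs ≠ [] ∧ (qs.length = 1 → 1 ≤ qs.getD 0 0) ∧
    (∀ i, 1 ≤ i → i + 1 < qs.length → 1 ≤ qs.getD i 0) ∧
    (2 ≤ qs.length → 2 ≤ qs.getLastD 0)

/-- The map `f([q₀,…,q_m]) = S(q₀,…,q_{m-1},q_m - 1)`. -/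
def cfToStr (qs : List ℕ) : List Bool :=
  blockStr (qs.dropLast ++ [qs.getLastD 0 - 1])

namespace Stmt17

/-- Alternating block string starting with bit `b`. -/
def bsb : Bool → List ℕ → List Bool
  | _, [] => []
  | b, k :: ks => List.replicate k b ++ bsb (!b) ks

lemma bsb_length : ∀ (b : Bool) (ks : List ℕ), (bsb b ks).length = ks.sum
  | _, [] => rfl
  | b, k :: ks => by simp [bsb, bsb_length]

lemma bsb_head? (b : Bool) (k : ℕ) (ks : List ℕ) (hk : 1 ≤ k) :
    (bsb b (k :: ks)).head? = some b := by
  cases k with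
  | zero => omega
  | succ m => simp [bsb, List.replicate_succ]

lemma decide_flip (n : ℕ) : decide ((n + 1) % 2 = 0) = !decide (n % 2 = 0) := by
  rcases Nat.mod_two_eq_zero_or_one n with h | h <;> simp [Nat.add_mod, h]

lemma blockStr_aux : ∀ (ks : List ℕ) (n : ℕ),
    (((List.range' n ks.length).zip ks).map fun p : ℕ × ℕ => List.replicate p.2 (decide (p.1 % 2 = 0))).flatten
      = bsb (decide (n % 2 = 0)) ks
  | [], _ => rfl
  | k :: ks, n => by
    rw [List.length_cons, List.range'_succ, List.zip_cons_cons, bsb]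
    simp only [List.map_cons, List.flatten_cons]
    rw [blockStr_aux ks (n + 1), decide_flip]

lemma blockStr_eq (ks : List ℕ) : blockStr ks = bsb true ks := by
  have h := blockStr_aux ks 0
  simpa [blockStr, List.range_eq_range'] using h

/-- Run-length encoding. -/
def rle : List Bool → List (Bool × ℕ)
  | [] => []
  | a :: t =>
    match rle t with
    | [] => [(a, 1)]
    | (b, n) :: r => if a = b then (b, n + 1) :: r else (a, 1) :: (b, n) :: r

lemma rle_cons_nil {t : List Bool} (a : Bool) (h : rle t = []) : rle (a :: t) = [(a, 1)] := by
  rw [rle, h]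

lemma rle_cons_cons {t : List Bool} (a b : Bool) (n : ℕ) {r : List (Bool × ℕ)}
    (h : rle t = (b, n) :: r) :
    rle (a :: t) = if a = b then (b, n + 1) :: r else (a, 1) :: (b, n) :: r := by
  rw [rle, h]

lemma rle_cons_headBit (a : Bool) (t : List Bool) : ∃ n r, rle (a :: t) = (a, n) :: r := by
  rcases h : rle t with _ | ⟨⟨b, n⟩, r⟩
  · exact ⟨1, [], rle_cons_nil a h⟩
  · by_cases hab : a = b
    · subst hab
      rw [rle_cons_cons a a n h, if_pos rfl]
      exact ⟨n + 1, r, rfl⟩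
    · rw [rle_cons_cons a b n h, if_neg hab]
      exact ⟨1, _, rfl⟩

lemma rle_pos : ∀ (S : List Bool), ∀ p ∈ rle S, 1 ≤ p.2
  | [], p, hp => by simp [rle] at hp
  | a :: t, p, hp => by
    rcases h : rle t with _ | ⟨⟨b, n⟩, r⟩
    · rw [rle_cons_nil a h] at hp
      simp at hp; subst hp; exact le_refl 1
    · rw [rle_cons_cons a b n h] at hp
      by_cases hab : a = b
      · rw [if_pos hab] at hp
        rcases List.mem_cons.1 hp with h1 | h1
        · subst h1; exact Nat.le_add_left 1 n
        · exact rle_pos t p (h ▸ List.mem_cons_of_mem _ h1)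
      · rw [if_neg hab] at hp
        rcases List.mem_cons.1 hp with h1 | h1
        · subst h1; exact le_refl 1
        · exact rle_pos t p (h ▸ h1)

lemma rle_chain : ∀ S : List Bool, List.IsChain (fun p q : Bool × ℕ => p.1 ≠ q.1) (rle S)
  | [] => by simp [rle]
  | a :: t => by
    have IH := rle_chain t
    rcases h : rle t with _ | ⟨⟨b, n⟩, r⟩
    · rw [rle_cons_nil a h]; simp
    · rw [h] at IH
      rw [rle_cons_cons a b n h]
      by_cases hab : a = b
      · rw [if_pos hab]
        rw [List.isChain_cons] at IH ⊢
        exact IH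
      · rw [if_neg hab]
        exact List.isChain_cons.2 ⟨fun y hy => by simp at hy; rw [← hy]; exact hab, IH⟩

lemma rle_flatten : ∀ S : List Bool,
    ((rle S).map fun p : Bool × ℕ => List.replicate p.2 p.1).flatten = S
  | [] => rfl
  | a :: t => by
    have IH := rle_flatten t
    rcases h : rle t with _ | ⟨⟨b, n⟩, r⟩
    · rw [h] at IH; simp at IH
      rw [rle_cons_nil a h]
      simp [IH]
    · rw [h] at IH
      rw [rle_cons_cons a b n h]
      by_cases hab : a = b
      · subst hab
        rw [if_pos rfl]
        simp only [List.map_cons, List.flatten_cons, List.replicate_succ, List.cons_append]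
        simp only [List.map_cons, List.flatten_cons] at IH
        rw [IH]
      · rw [if_neg hab]
        simp only [List.map_cons, List.flatten_cons] at IH ⊢
        simp [IH]

lemma bsb_of_rle : ∀ (L : List (Bool × ℕ)) (b : Bool),
    List.IsChain (fun p q : Bool × ℕ => p.1 ≠ q.1) L → (∀ p ∈ L.head?, p.1 = b) →
    (L.map fun p : Bool × ℕ => List.replicate p.2 p.1).flatten = bsb b (L.map Prod.snd)
  | [], b, _, _ => rfl
  | (c, n) :: t, b, hch, hhd => by
    have hc : c = b := hhd (c, n) rfl
    subst hc
    simp only [List.map_cons, List.flatten_cons, bsb]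
    congr 1
    apply bsb_of_rle t (!c) (List.IsChain.tail hch)
    intro p hp
    cases t with
    | nil => simp at hp
    | cons q t' =>
      obtain ⟨qb, qn⟩ := q
      simp only [List.head?_cons, Option.mem_def, Option.some_inj] at hp
      have h1 : c ≠ qb := (List.isChain_cons_cons.1 hch).1
      rw [← hp]
      cases c <;> cases qb <;> simp_all

lemma rle_replicate_append : ∀ (n : ℕ) (b : Bool) (S : List Bool), 1 ≤ n →
    S.head? ≠ some b → rle (List.replicate n b ++ S) = (b, n) :: rle S := by
  intro n
  induction n with
  | zero => intro b S h; omega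
  | succ m IH =>
    intro b S _ hS
    cases m with
    | zero =>
      simp only [List.replicate_succ, List.replicate_zero, List.nil_append, List.cons_append]
      cases S with
      | nil => simp [rle]
      | cons a t =>
        have hab : a ≠ b := by
          intro h; apply hS; simp [h]
        obtain ⟨n', r', hr⟩ := rle_cons_headBit a t
        rw [rle_cons_cons b a n' hr, if_neg (Ne.symm hab), ← hr]
    | succ m' =>
      have hin := IH b S (by omega) hS
      rw [List.replicate_succ, List.cons_append, rle_cons_cons b b (m' + 1) hin, if_pos rfl]

/-- The run list of `bsb b ks` for positive `ks`. -/
def altZip : Bool → List ℕ → List (Bool × ℕ)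
  | _, [] => []
  | b, k :: ks => (b, k) :: altZip (!b) ks

lemma map_snd_altZip : ∀ (b : Bool) (ks : List ℕ), (altZip b ks).map Prod.snd = ks
  | _, [] => rfl
  | b, k :: ks => by simp [altZip, map_snd_altZip]

lemma rle_bsb : ∀ (ks : List ℕ) (b : Bool), (∀ x ∈ ks, 1 ≤ x) →
    rle (bsb b ks) = altZip b ks
  | [], b, _ => rfl
  | k :: ks, b, h => by
    rw [bsb, altZip, rle_replicate_append k b _ (h k (by simp)) ?head]
    · rw [rle_bsb ks (!b) (fun x hx => h x (by simp [hx]))]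
    case head =>
      cases ks with
      | nil => simp [bsb]
      | cons k' ks' =>
        rw [bsb_head? (!b) k' ks' (h k' (by simp))]
        cases b <;> simp

/-- Decode a string into canonical block lengths (starting with an R-block). -/
def r0 (S : List Bool) : List ℕ :=
  match rle S with
  | [] => [0]
  | (true, n) :: t => n :: t.map Prod.snd
  | (false, n) :: t => 0 :: n :: t.map Prod.snd

lemma r0_of_rle_nil {S : List Bool} (h : rle S = []) : r0 S = [0] := by
  rw [r0, h]

lemma r0_of_rle_true {S : List Bool} {n : ℕ} {t : List (Bool × ℕ)}
    (h : rle S = (true, n) :: t) : r0 S = n :: t.map Prod.snd := by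
  rw [r0, h]

lemma r0_of_rle_false {S : List Bool} {n : ℕ} {t : List (Bool × ℕ)}
    (h : rle S = (false, n) :: t) : r0 S = 0 :: n :: t.map Prod.snd := by
  rw [r0, h]

lemma r0_ne_nil (S : List Bool) : r0 S ≠ [] := by
  rcases h : rle S with _ | ⟨⟨b, n⟩, t⟩
  · rw [r0_of_rle_nil h]; simp
  · cases b
    · rw [r0_of_rle_false h]; simp
    · rw [r0_of_rle_true h]; simp

lemma r0_tail_pos (S : List Bool) : ∀ x ∈ (r0 S).tail, 1 ≤ x := by
  rcases h : rle S with _ | ⟨⟨b, n⟩, t⟩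
  · rw [r0_of_rle_nil h]; simp
  · cases b
    · rw [r0_of_rle_false h]
      intro x hx
      simp only [List.tail_cons] at hx
      rcases List.mem_cons.1 hx with h1 | h1
      · rw [h1]
        exact rle_pos S (false, n) (h ▸ List.mem_cons_self)
      · obtain ⟨p, hp, hpx⟩ := List.mem_map.1 h1
        subst hpx
        exact rle_pos S p (h ▸ List.mem_cons_of_mem _ hp)
    · rw [r0_of_rle_true h]
      intro x hx
      simp only [List.tail_cons] at hx
      obtain ⟨p, hp, hpx⟩ := List.mem_map.1 hx
      subst hpx
      exact rle_pos S p (h ▸ List.mem_cons_of_mem _ hp)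

lemma blockStr_r0 (S : List Bool) : blockStr (r0 S) = S := by
  rw [blockStr_eq]
  rcases h : rle S with _ | ⟨⟨b, n⟩, t⟩
  · have hfl := rle_flatten S
    rw [h] at hfl
    simp at hfl
    rw [r0_of_rle_nil h]
    simp [bsb, ← hfl]
  · have hfl := rle_flatten S
    rw [h] at hfl
    have hch := rle_chain S
    rw [h] at hch
    cases b
    · have hkey := bsb_of_rle ((false, n) :: t) false hch
        (by intro p hp; simp at hp; rw [← hp])
      rw [hfl] at hkey
      simp only [List.map_cons] at hkey
      rw [r0_of_rle_false h, bsb]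
      simp [← hkey]
    · have hkey := bsb_of_rle ((true, n) :: t) true hch
        (by intro p hp; simp at hp; rw [← hp])
      rw [hfl] at hkey
      simp only [List.map_cons] at hkey
      rw [r0_of_rle_true h]
      exact hkey.symm

lemma r0_blockStr (k : ℕ) (ks : List ℕ) (h : ∀ x ∈ ks, 1 ≤ x) :
    r0 (blockStr (k :: ks)) = k :: ks := by
  rw [blockStr_eq]
  cases ks with
  | nil =>
    cases k with
    | zero =>
      have hb : bsb true [0] = [] := by simp [bsb]
      have hnil : rle ([] : List Bool) = [] := rfl
      rw [hb, r0_of_rle_nil hnil]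
    | succ m =>
      have hr : rle (bsb true [m + 1]) = [(true, m + 1)] := by
        rw [rle_bsb [m + 1] true (by simp)]; rfl
      rw [r0_of_rle_true hr]
      rfl
  | cons k1 ks1 =>
    cases k with
    | zero =>
      have hb : bsb true (0 :: k1 :: ks1) = bsb false (k1 :: ks1) := by
        simp [bsb]
      rw [hb]
      have hr : rle (bsb false (k1 :: ks1)) = (false, k1) :: altZip true ks1 := by
        rw [rle_bsb _ _ h]; rfl
      rw [r0_of_rle_false hr]
      simp [map_snd_altZip]
    | succ m =>
      have hall : ∀ x ∈ (m + 1) :: k1 :: ks1, 1 ≤ x := by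
        intro x hx
        rcases List.mem_cons.1 hx with h1 | h1
        · omega
        · exact h x h1
      have hr : rle (bsb true ((m + 1) :: k1 :: ks1))
          = (true, m + 1) :: altZip false (k1 :: ks1) := by
        rw [rle_bsb _ _ hall]; rfl
      rw [r0_of_rle_true hr]
      simp [altZip, map_snd_altZip]

/-- The inverse map: decode runs, then add 1 to the last block length. -/
def strToCf (S : List Bool) : List ℕ :=
  (r0 S).dropLast ++ [(r0 S).getLastD 0 + 1]

lemma dropLast_concat_getLastD (l : List ℕ) (h : l ≠ []) :
    l.dropLast ++ [l.getLastD 0] = l := by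
  rw [List.getLastD_eq_getLast? , List.getLast?_eq_getLast h]
  simp [List.dropLast_append_getLast]

lemma getLastD_concat' (l : List ℕ) (x : ℕ) : (l ++ [x]).getLastD 0 = x := by
  rw [List.getLastD_eq_getLast?]
  simp

lemma tail_getD (l : List ℕ) (hl : ∀ x ∈ l.tail, 1 ≤ x) (i : ℕ)
    (h1 : 1 ≤ i) (h2 : i < l.length) : 1 ≤ l.getD i 0 := by
  rw [List.getD_eq_getElem l 0 h2]
  apply hl
  have hlen : i - 1 < l.tail.length := by simp; omega
  have : l[i] = l.tail[i - 1]'hlen := by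
    rw [List.getElem_tail]
    congr 1
    omega
  rw [this]
  exact List.getElem_mem _

lemma getLastD_eq_getD (l : List ℕ) (h : l ≠ []) :
    l.getLastD 0 = l.getD (l.length - 1) 0 := by
  rw [List.getLastD_eq_getLast?, List.getLast?_eq_getLast h,
    List.getLast_eq_getElem, List.getD_eq_getElem]
  · rfl

lemma last_ge_one (qs : List ℕ) (h : CFAdmissible qs) : 1 ≤ qs.getLastD 0 := by
  obtain ⟨hne, h1, _, hlast⟩ := h
  rcases qs with _ | ⟨q0, qt⟩
  · exact absurd rfl hne
  · cases qt with
    | nil =>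
      have := h1 rfl
      simpa using this
    | cons q1 qt' =>
      have := hlast (by simp only [List.length_cons]; omega)
      omega

lemma ks_canonical (qs : List ℕ) (h : CFAdmissible qs) :
    ∃ k rest, qs.dropLast ++ [qs.getLastD 0 - 1] = k :: rest ∧ ∀ x ∈ rest, 1 ≤ x := by
  obtain ⟨hne, h1, hmid, hlast⟩ := h
  rcases qs with _ | ⟨q0, qt⟩
  · exact absurd rfl hne
  · cases qt with
    | nil => exact ⟨q0 - 1, [], rfl, by simp⟩
    | cons q1 qt' =>
      refine ⟨q0, (q1 :: qt').dropLast ++ [(q0 :: q1 :: qt').getLastD 0 - 1], by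
        simp [List.dropLast_cons_of_ne_nil], ?_⟩
      intro x hx
      rcases List.mem_append.1 hx with h1' | h1'
      · obtain ⟨j, hj, hjx⟩ := List.mem_iff_getElem.1 h1'
        have hjl : j < qt'.length := by
          simpa [List.length_dropLast] using hj
        have hx' : x = (q0 :: q1 :: qt').getD (j + 1) 0 := by
          rw [← hjx, List.getElem_dropLast, List.getD_eq_getElem]
          · rfl
          · simp; omega
        rw [hx']
        apply hmid (j + 1) (by omega)
        simp
        omega
      · rw [List.mem_singleton] at h1'
        have h2 := hlast (by simp only [List.length_cons]; omega)
        omega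

lemma strToCf_cfToStr (qs : List ℕ) (h : CFAdmissible qs) : strToCf (cfToStr qs) = qs := by
  obtain ⟨k, rest, hks, hrest⟩ := ks_canonical qs h
  unfold cfToStr strToCf
  rw [hks, r0_blockStr k rest hrest, ← hks, List.dropLast_concat, getLastD_concat']
  have hge := last_ge_one qs h
  have : qs.getLastD 0 - 1 + 1 = qs.getLastD 0 := by omega
  rw [this, dropLast_concat_getLastD qs h.1]

lemma cfToStr_strToCf (S : List Bool) : cfToStr (strToCf S) = S := by
  unfold cfToStr strToCf
  rw [List.dropLast_concat, getLastD_concat']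
  simp only [Nat.add_sub_cancel]
  rw [dropLast_concat_getLastD _ (r0_ne_nil S)]
  exact blockStr_r0 S

lemma strToCf_admissible (S : List Bool) : CFAdmissible (strToCf S) := by
  have hne := r0_ne_nil S
  have htail := r0_tail_pos S
  have hlen : (strToCf S).length = (r0 S).length := by
    unfold strToCf
    simp [List.length_dropLast]
    have : 1 ≤ (r0 S).length := List.length_pos_iff.2 hne
    omega
  refine ⟨by unfold strToCf; simp, ?_, ?_, ?_⟩
  · intro h1
    have hd : (r0 S).dropLast = [] := by
      have : (r0 S).dropLast.length = 0 := by
        have := hlen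
        rw [h1] at this
        simp [List.length_dropLast]
        omega
      exact List.length_eq_zero_iff.1 this
    unfold strToCf
    rw [hd]
    simp
  · intro i hi1 hi2
    rw [hlen] at hi2
    have hidl : i < (r0 S).dropLast.length := by
      simp [List.length_dropLast]; omega
    unfold strToCf
    rw [List.getD_eq_getElem _ 0 (by simp [List.length_dropLast]; omega),
      List.getElem_append_left hidl, List.getElem_dropLast]
    have := tail_getD (r0 S) htail i hi1 (by omega)
    rwa [List.getD_eq_getElem _ 0 (by omega)] at this
  · intro h2
    unfold strToCf
    rw [getLastD_concat']
    have hlen2 : 2 ≤ (r0 S).length := by rw [← hlen]; exact h2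
    have : 1 ≤ (r0 S).getLastD 0 := by
      rw [getLastD_eq_getD _ hne]
      exact tail_getD (r0 S) htail _ (by omega) (by omega)
    omega

lemma cfToStr_length (qs : List ℕ) (h : CFAdmissible qs) :
    (cfToStr qs).length = qs.sum - 1 := by
  unfold cfToStr
  rw [blockStr_eq, bsb_length]
  have hsum : qs.dropLast.sum + qs.getLastD 0 = qs.sum := by
    conv_rhs => rw [← dropLast_concat_getLastD qs h.1]
    simp
  have hge := last_ge_one qs h
  simp only [List.sum_append, List.sum_cons, List.sum_nil]
  omega

end Stmt17

/-- Theorem 3.1(a),(c): the map `f([q₀,…,q_m]) = S(q₀,…,q_{m-1},q_m - 1)` is a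
bijection from admissible continued-fraction sequences onto all LR-strings, and
it preserves level: `|f([q₀,…,q_m])| = q₀ + ⋯ + q_m - 1`. -/
theorem stmt17 :
    Set.BijOn cfToStr {qs : List ℕ | CFAdmissible qs} Set.univ ∧
      ∀ qs : List ℕ, CFAdmissible qs → (cfToStr qs).length = qs.sum - 1 := by
  refine ⟨⟨fun qs _ => Set.mem_univ _, ?_, ?_⟩, fun qs h => Stmt17.cfToStr_length qs h⟩
  · intro a ha b hb hab
    rw [← Stmt17.strToCf_cfToStr a ha, hab, Stmt17.strToCf_cfToStr b hb]
  · intro S _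
    exact ⟨Stmt17.strToCf S, Stmt17.strToCf_admissible S, Stmt17.cfToStr_strToCf S⟩
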